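/- For any two partitions λ and μ, the following identity holds in the Laurent polynomial ring ℤ[t₁^{±1}, t₂^{±1}]: G_μ + t₁t₂·Ḡ_λ − (1−t₁)(1−t₂)·G_μ·Ḡ_λ = ∑_{□ ∈ μ} t₁^{−a_μ(□)} t₂^{l_λ(□)+1} + ∑_{□ ∈ λ} t₁^{a_λ(□)+1} t₂^{−l_μ(□)}, where in the first sum the box □ = (i,j) ranges over the diagram of μ and one takes the arm-length in μ and the leg-length of the same box position in λ, and in the second sum □ ranges over the diagram of λ and one takes the arm-length in λ and the leg-length of the same box position in μ. -/

import Mathlib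

/-! Laurent polynomials in two variables `t₁, t₂`: the group algebra of `ℤ × ℤ`
over `ℤ`, where `(a, b)` records the exponents of `t₁` and `t₂`. -/
noncomputable abbrev LaurentTwo := AddMonoidAlgebra ℤ (ℤ × ℤ)

/-- The monomial `t₁ ^ a * t₂ ^ b`. -/
noncomputable def tMon (a b : ℤ) : LaurentTwo := AddMonoidAlgebra.single (a, b) 1

/- A partition is a weakly decreasing, eventually zero sequence `l : ℕ → ℕ`
(0-indexed: `λᵢ = l (i-1)`); its diagram consists of the 0-indexed boxes
`(i, j)` with `j < l i`, corresponding to the paper's boxes `(i+1, j+1)`. -/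

/-- `G_λ = ∑_{(i,j) ∈ λ} t₁^{1-j} t₂^{1-i}` (1-indexed boxes), i.e.
`∑ t₁^{-j} t₂^{-i}` over 0-indexed boxes. -/
noncomputable def GP (l : ℕ → ℕ) : LaurentTwo :=
  ∑ᶠ (p : ℕ × ℕ) (_ : p.2 < l p.1), tMon (-(p.2 : ℤ)) (-(p.1 : ℤ))

/-- `Ḡ_λ`: the image of `G_λ` under `t₁ ↦ t₁⁻¹`, `t₂ ↦ t₂⁻¹`. -/
noncomputable def GPbar (l : ℕ → ℕ) : LaurentTwo :=
  ∑ᶠ (p : ℕ × ℕ) (_ : p.2 < l p.1), tMon (p.2 : ℤ) (p.1 : ℤ)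

/-- The conjugate partition: `conjPart l j = λ′_{j+1} = #{i : l i > j}`. -/
noncomputable def conjPart (l : ℕ → ℕ) (j : ℕ) : ℕ := Nat.card {i : ℕ // j < l i}

/-! ### Auxiliary lemmas -/

lemma tMon_mul (a b c d : ℤ) : tMon a b * tMon c d = tMon (a+c) (b+d) := by
  simp [tMon, AddMonoidAlgebra.single_mul_single, Prod.mk_add_mk]

lemma tMon_zero : tMon 0 0 = 1 := rfl

lemma tMon_congr {a b a' b' : ℤ} (h1 : a = a') (h2 : b = b') : tMon a b = tMon a' b' := by
  rw [h1, h2]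

lemma tMon_ne_zero (a b : ℤ) : tMon a b ≠ 0 :=
  fun h => one_ne_zero (AddMonoidAlgebra.single_eq_zero.mp h)

lemma tMon_sub_one_ne (a b : ℤ) (h : ¬(a = 0 ∧ b = 0)) : tMon a b - 1 ≠ 0 := by
  intro hc
  have h1 : tMon a b = 1 := by linear_combination (norm := abel) hc
  rw [tMon, AddMonoidAlgebra.one_def] at h1
  have h2 := (AddMonoidAlgebra.single_left_inj one_ne_zero).1 h1
  exact h (by simpa [Prod.ext_iff] using h2)

lemma geo (a b : ℤ) (n : ℕ) :
    (tMon a b - 1) * ∑ j ∈ Finset.range n, tMon (j * a) (j * b)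
      = tMon (n * a) (n * b) - 1 := by
  rw [Finset.mul_sum]
  have : ∀ j ∈ Finset.range n, (tMon a b - 1) * tMon (j * a) (j * b)
      = tMon ((j+1 : ℕ) * a) ((j+1 : ℕ) * b) - tMon (j * a) (j * b) := by
    intro j _
    rw [sub_mul, one_mul, tMon_mul]
    push_cast
    ring_nf
  rw [Finset.sum_congr rfl this, Finset.sum_range_sub (fun j => tMon (j * a) (j * b))]
  simpa using tMon_zero

lemma geoV (c : ℕ) : (tMon 0 1 - 1) * ∑ k ∈ Finset.range c, tMon 0 k = tMon 0 c - 1 := by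
  have := geo 0 1 c
  simpa using this

lemma geoVneg (c : ℕ) :
    (tMon 0 (-1) - 1) * ∑ k ∈ Finset.range c, tMon 0 (-k) = tMon 0 (-c) - 1 := by
  have := geo 0 (-1) c
  simpa [mul_comm] using this

lemma geoU (c : ℕ) : (tMon 1 0 - 1) * ∑ k ∈ Finset.range c, tMon k 0 = tMon c 0 - 1 := by
  have := geo 1 0 c
  simpa using this

lemma geoUneg (c : ℕ) :
    (tMon (-1) 0 - 1) * ∑ k ∈ Finset.range c, tMon (-k) 0 = tMon (-c) 0 - 1 := by
  have := geo (-1) 0 c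
  simpa [mul_comm] using this

lemma uA (p : ℕ) : (tMon 1 0 - 1) * ∑ j ∈ Finset.range p, tMon (-(j:ℤ)) 0
    = tMon 1 0 - tMon (1 - p) 0 := by
  have h := geoUneg p
  have h2 : tMon 1 0 * ((tMon (-1) 0 - 1) * ∑ j ∈ Finset.range p, tMon (-(j:ℤ)) 0)
      = tMon 1 0 * (tMon (-(p:ℤ)) 0 - 1) := by rw [h]
  have e1 : tMon 1 0 * (tMon (-1) 0 - 1) = 1 - tMon 1 0 := by
    rw [mul_sub, tMon_mul, mul_one]; norm_num [tMon_zero]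
  have e2 : tMon 1 0 * (tMon (-(p:ℤ)) 0 - 1) = tMon (1 - p) 0 - tMon 1 0 := by
    rw [mul_sub, tMon_mul, mul_one]; ring_nf
  calc (tMon 1 0 - 1) * ∑ j ∈ Finset.range p, tMon (-(j:ℤ)) 0
      = -((tMon 1 0 * (tMon (-1) 0 - 1)) * ∑ j ∈ Finset.range p, tMon (-(j:ℤ)) 0) := by
        rw [e1]; ring
    _ = -(tMon (1 - p) 0 - tMon 1 0) := by rw [mul_assoc, h2, e2]
    _ = tMon 1 0 - tMon (1 - p) 0 := by ring

/-- The one-variable fiber identity. -/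
lemma fiber (p q : ℕ) :
    (1 - tMon 1 0) * ((∑ j ∈ Finset.range p, tMon (-(j:ℤ)) 0)
        * (∑ j ∈ Finset.range q, tMon (j:ℤ) 0))
      = ∑ j ∈ Finset.range (min p q), (tMon ((j:ℤ)+1-p) 0 - tMon ((q:ℤ)-j) 0) := by
  have hu : tMon 1 0 - 1 ≠ 0 := tMon_sub_one_ne 1 0 (by omega)
  apply mul_left_cancel₀ hu
  have hA := uA p
  have hB := geoU q
  have hL : (tMon 1 0 - 1) * ((1 - tMon 1 0) * ((∑ j ∈ Finset.range p, tMon (-(j:ℤ)) 0)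
        * (∑ j ∈ Finset.range q, tMon (j:ℤ) 0)))
      = -((tMon 1 0 - tMon (1 - p) 0) * (tMon (q:ℤ) 0 - 1)) := by
    rw [← hA, ← hB]; ring
  rw [hL]
  have hR : (tMon 1 0 - 1) * ∑ j ∈ Finset.range (min p q),
        (tMon ((j:ℤ)+1-p) 0 - tMon ((q:ℤ)-j) 0)
      = (tMon ((min p q : ℤ)+1-p) 0 - tMon (1-p) 0)
        - (tMon ((q:ℤ)+1) 0 - tMon ((q:ℤ)+1-min p q) 0) := by
    rw [Finset.mul_sum]
    have : ∀ j ∈ Finset.range (min p q),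
        (tMon 1 0 - 1) * (tMon ((j:ℤ)+1-p) 0 - tMon ((q:ℤ)-j) 0)
          = ((fun j : ℕ => tMon ((j:ℤ)+1-p) 0) (j+1) - (fun j : ℕ => tMon ((j:ℤ)+1-p) 0) j)
            - ((fun j : ℕ => tMon ((q:ℤ)+1-j) 0) j - (fun j : ℕ => tMon ((q:ℤ)+1-j) 0) (j+1)) := by
      intro j _
      simp only []
      rw [sub_mul, one_mul, mul_sub, tMon_mul, tMon_mul]
      push_cast
      ring_nf
    rw [Finset.sum_congr rfl this, Finset.sum_sub_distrib,
      Finset.sum_range_sub (fun j : ℕ => tMon ((j:ℤ)+1-p) 0),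
      Finset.sum_range_sub' (fun j : ℕ => tMon ((q:ℤ)+1-j) 0)]
    push_cast
    ring_nf
  rw [hR]
  have expand : -((tMon 1 0 - tMon (1 - p) 0) * (tMon (q:ℤ) 0 - 1))
      = -(tMon ((q:ℤ)+1) 0) + tMon 1 0 + tMon ((q:ℤ)+1-p) 0 - tMon (1-p) 0 := by
    rw [sub_mul, mul_sub, mul_sub, tMon_mul, tMon_mul, mul_one, mul_one]
    ring_nf
  rw [expand]
  rcases le_total p q with h | h
  · have h1 : min p q = p := min_eq_left h
    have h2 : ((p:ℤ) ⊓ (q:ℤ)) = (p:ℤ) := min_eq_left (by exact_mod_cast h)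
    rw [h1, h2]
    ring_nf
  · have h1 : min p q = q := min_eq_right h
    have h2 : ((p:ℤ) ⊓ (q:ℤ)) = (q:ℤ) := min_eq_right (by exact_mod_cast h)
    rw [h1, h2]
    ring_nf

lemma downset_card (S : Finset ℕ) (h : ∀ a b : ℕ, a ≤ b → b ∈ S → a ∈ S) (k : ℕ) :
    k ∈ S ↔ k < S.card := by
  constructor
  · intro hk
    have hsub : Finset.range (k+1) ⊆ S := fun a ha =>
      h a k (Nat.lt_succ_iff.mp (Finset.mem_range.1 ha)) hk
    have := Finset.card_le_card hsub
    simpa using this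
  · intro hk
    by_contra hns
    have hsub : S ⊆ Finset.range k := by
      intro b hb
      rw [Finset.mem_range]
      by_contra hbk
      push_neg at hbk
      exact hns (h k b hbk hb)
    have := Finset.card_le_card hsub
    simp at this
    omega

lemma conjPart_card (l : ℕ → ℕ) (N : ℕ) (hN : ∀ i, N ≤ i → l i = 0) (j : ℕ) :
    conjPart l j = ((Finset.range N).filter (fun i => j < l i)).card := by
  have hset : {i : ℕ | j < l i} = ↑((Finset.range N).filter (fun i => j < l i)) := by
    ext i
    simp only [Set.mem_setOf_eq, Finset.coe_filter, Finset.mem_range, Set.mem_setOf_eq]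
    constructor
    · intro hi
      refine ⟨?_, hi⟩
      by_contra hiN
      push_neg at hiN
      rw [hN i hiN] at hi; omega
    · exact fun h => h.2
  rw [conjPart]
  have : {i : ℕ // j < l i} = ↥{i : ℕ | j < l i} := rfl
  rw [this, Nat.card_coe_set_eq, hset, Set.ncard_coe_finset]

lemma conjPart_iff (l : ℕ → ℕ) (hl : Antitone l) (N : ℕ) (hN : ∀ i, N ≤ i → l i = 0)
    (j i : ℕ) : j < l i ↔ i < conjPart l j := by
  rw [conjPart_card l N hN j]
  set S := (Finset.range N).filter (fun i => j < l i) with hS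
  have hdown : ∀ a b : ℕ, a ≤ b → b ∈ S → a ∈ S := by
    intro a b hab hb
    rw [hS, Finset.mem_filter, Finset.mem_range] at hb ⊢
    exact ⟨lt_of_le_of_lt hab hb.1, lt_of_lt_of_le hb.2 (hl hab)⟩
  rw [← downset_card S hdown i, hS, Finset.mem_filter, Finset.mem_range]
  constructor
  · intro hi
    refine ⟨?_, hi⟩
    by_contra hiN
    push_neg at hiN
    rw [hN i hiN] at hi; omega
  · exact fun h => h.2

lemma conjPart_le (l : ℕ → ℕ) (N : ℕ) (hN : ∀ i, N ≤ i → l i = 0) (j : ℕ) :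
    conjPart l j ≤ N := by
  rw [conjPart_card l N hN j]
  exact (Finset.card_filter_le _ _).trans (by simp)

/-- Convert a box-finsum into a double Finset sum. -/
lemma finsum_boxes (f : ℕ → ℕ) (F : ℕ × ℕ → LaurentTwo) (hF : ∀ p, F p ≠ 0)
    (N : ℕ) (hN : ∀ i, N ≤ i → f i = 0) (hfle : ∀ i, f i ≤ N) :
    (∑ᶠ (p : ℕ × ℕ) (_ : p.2 < f p.1), F p)
      = ∑ i ∈ Finset.range N, ∑ j ∈ Finset.range (f i), F (i, j) := by
  classical
  rw [finsum_cond_eq_sum_of_cond_iff F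
    (t := (Finset.range N ×ˢ Finset.range N).filter (fun p => p.2 < f p.1)) ?_]
  · rw [Finset.sum_filter, Finset.sum_product]
    refine Finset.sum_congr rfl fun i _ => ?_
    rw [← Finset.sum_filter]
    congr 1
    have := hfle i
    ext j
    simp only [Finset.mem_filter, Finset.mem_range]
    omega
  · intro x _
    simp only [Finset.mem_filter, Finset.mem_product, Finset.mem_range]
    constructor
    · intro hx
      have h1 : x.1 < N := by
        by_contra hc
        push_neg at hc
        rw [hN x.1 hc] at hx; omega
      exact ⟨⟨h1, lt_of_lt_of_le hx (hfle x.1)⟩, hx⟩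
    · exact fun h => h.2

lemma sum_ite_range_min (a b : ℕ) (X : ℕ → LaurentTwo) :
    ∑ j ∈ Finset.range a, (if j < b then X j else 0)
      = ∑ j ∈ Finset.range (min a b), X j := by
  classical
  rw [← Finset.sum_filter]
  congr 1
  ext j
  simp only [Finset.mem_filter, Finset.mem_range, Finset.mem_range, lt_min_iff]

/-! ### The main theorem -/

theorem ext_character_identity (l m : ℕ → ℕ)
    (hl : Antitone l) (hm : Antitone m)
    (hl0 : ∃ N, ∀ i, N ≤ i → l i = 0) (hm0 : ∃ N, ∀ i, N ≤ i → m i = 0) :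
    GP m + tMon 1 1 * GPbar l - (1 - tMon 1 0) * (1 - tMon 0 1) * (GP m * GPbar l)
      =
      (∑ᶠ (p : ℕ × ℕ) (_ : p.2 < m p.1),
        tMon (-((m p.1 : ℤ) - (p.2 : ℤ) - 1)) (((conjPart l p.2 : ℤ) - (p.1 : ℤ) - 1) + 1))
      +
      (∑ᶠ (p : ℕ × ℕ) (_ : p.2 < l p.1),
        tMon (((l p.1 : ℤ) - (p.2 : ℤ) - 1) + 1) (-((conjPart m p.2 : ℤ) - (p.1 : ℤ) - 1))) := by
  classical
  obtain ⟨Nl, hNl⟩ := hl0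
  obtain ⟨Nm, hNm⟩ := hm0
  set N := Nl + Nm + l 0 + m 0 with hNdef
  have hlN : ∀ i, N ≤ i → l i = 0 := fun i hi => hNl i (by omega)
  have hmN : ∀ i, N ≤ i → m i = 0 := fun i hi => hNm i (by omega)
  have hlle : ∀ i, l i ≤ N := fun i => le_trans (hl (Nat.zero_le i)) (by omega)
  have hmle : ∀ i, m i ≤ N := fun i => le_trans (hm (Nat.zero_le i)) (by omega)
  have hconjl : ∀ j i : ℕ, j < l i ↔ i < conjPart l j := conjPart_iff l hl N hlN
  have hconjm : ∀ j i : ℕ, j < m i ↔ i < conjPart m j := conjPart_iff m hm N hmN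
  have hconjlle : ∀ j, conjPart l j ≤ N := conjPart_le l N hlN
  have hconjmle : ∀ j, conjPart m j ≤ N := conjPart_le m N hmN
  -- conversions to finite sums
  have hGm : GP m
      = ∑ i ∈ Finset.range N, ∑ j ∈ Finset.range (m i), tMon (-(j:ℤ)) (-(i:ℤ)) :=
    finsum_boxes m _ (fun p => tMon_ne_zero _ _) N hmN hmle
  have hGl : GPbar l
      = ∑ k ∈ Finset.range N, ∑ j ∈ Finset.range (l k), tMon (j:ℤ) (k:ℤ) :=
    finsum_boxes l _ (fun p => tMon_ne_zero _ _) N hlN hlle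
  have hR1conv : (∑ᶠ (p : ℕ × ℕ) (_ : p.2 < m p.1),
        tMon (-((m p.1 : ℤ) - (p.2 : ℤ) - 1)) (((conjPart l p.2 : ℤ) - (p.1 : ℤ) - 1) + 1))
      = ∑ i ∈ Finset.range N, ∑ j ∈ Finset.range (m i),
          tMon (-((m i : ℤ) - (j : ℤ) - 1)) (((conjPart l j : ℤ) - (i : ℤ) - 1) + 1) :=
    finsum_boxes m _ (fun p => tMon_ne_zero _ _) N hmN hmle
  have hR2conv : (∑ᶠ (p : ℕ × ℕ) (_ : p.2 < l p.1),
        tMon (((l p.1 : ℤ) - (p.2 : ℤ) - 1) + 1) (-((conjPart m p.2 : ℤ) - (p.1 : ℤ) - 1)))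
      = ∑ k ∈ Finset.range N, ∑ j ∈ Finset.range (l k),
          tMon (((l k : ℤ) - (j : ℤ) - 1) + 1) (-((conjPart m j : ℤ) - (k : ℤ) - 1)) :=
    finsum_boxes l _ (fun p => tMon_ne_zero _ _) N hlN hlle
  -- column expansions via conjugates
  have hcolL : ∀ j : ℕ, tMon 0 (conjPart l j : ℤ)
      = 1 + (tMon 0 1 - 1) * ∑ k ∈ Finset.range N, (if j < l k then tMon 0 (k:ℤ) else 0) := by
    intro j
    have h2 : ∑ k ∈ Finset.range (conjPart l j), tMon 0 (k:ℤ)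
        = ∑ k ∈ Finset.range N, (if j < l k then tMon 0 (k:ℤ) else 0) := by
      rw [← Finset.sum_filter]
      congr 1
      ext k
      simp only [Finset.mem_filter, Finset.mem_range]
      have h3 := hconjl j k
      have h4 := hconjlle j
      constructor
      · intro hk; exact ⟨by omega, h3.2 hk⟩
      · intro hk; exact h3.1 hk.2
    rw [← h2]
    linear_combination -geoV (conjPart l j)
  have hcolM : ∀ j : ℕ, tMon 0 (-(conjPart m j : ℤ))
      = 1 + (tMon 0 (-1) - 1)
          * ∑ i ∈ Finset.range N, (if j < m i then tMon 0 (-(i:ℤ)) else 0) := by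
    intro j
    have h2 : ∑ i ∈ Finset.range (conjPart m j), tMon 0 (-(i:ℤ))
        = ∑ i ∈ Finset.range N, (if j < m i then tMon 0 (-(i:ℤ)) else 0) := by
      rw [← Finset.sum_filter]
      congr 1
      ext i
      simp only [Finset.mem_filter, Finset.mem_range]
      have h3 := hconjm j i
      have h4 := hconjmle j
      constructor
      · intro hk; exact ⟨by omega, h3.2 hk⟩
      · intro hk; exact h3.1 hk.2
    rw [← h2]
    linear_combination -geoVneg (conjPart m j)
  -- vertical shift helper
  have vshift : ∀ a b : ℤ, (tMon 0 (-1) - 1) * tMon a (b+1) = -((tMon 0 1 - 1) * tMon a b) := by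
    intro a b
    rw [sub_mul, sub_mul, one_mul, one_mul, tMon_mul, tMon_mul]
    rw [tMon_congr (show (0:ℤ)+a = a by ring) (show (-1)+(b+1) = b by ring),
      tMon_congr (show (0:ℤ)+a = a by ring) (show (1:ℤ)+b = b+1 by ring)]
    ring
  -- Step R1
  have hR1 : (∑ i ∈ Finset.range N, ∑ j ∈ Finset.range (m i),
        tMon (-((m i : ℤ) - (j : ℤ) - 1)) (((conjPart l j : ℤ) - (i : ℤ) - 1) + 1))
      = (∑ i ∈ Finset.range N, ∑ j ∈ Finset.range (m i), tMon (-(j:ℤ)) (-(i:ℤ)))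
        + ∑ i ∈ Finset.range N, ∑ k ∈ Finset.range N,
            (tMon 0 1 - 1) * tMon 0 ((k:ℤ)-(i:ℤ))
              * ∑ j ∈ Finset.range (min (m i) (l k)), tMon ((j:ℤ)+1-(m i:ℤ)) 0 := by
    have step1 : ∀ i : ℕ, ∀ j ∈ Finset.range (m i),
        tMon (-((m i : ℤ) - (j : ℤ) - 1)) (((conjPart l j : ℤ) - (i : ℤ) - 1) + 1)
          = tMon ((j:ℤ)+1-(m i:ℤ)) (-(i:ℤ))
            + ∑ k ∈ Finset.range N,
                (if j < l k then (tMon 0 1 - 1) * tMon ((j:ℤ)+1-(m i:ℤ)) ((k:ℤ)-(i:ℤ)) else 0) := by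
      intro i j _
      have e1 : tMon (-((m i : ℤ) - (j : ℤ) - 1)) (((conjPart l j : ℤ) - (i : ℤ) - 1) + 1)
          = tMon ((j:ℤ)+1-(m i:ℤ)) (-(i:ℤ)) * tMon 0 (conjPart l j : ℤ) := by
        rw [tMon_mul]; exact tMon_congr (by ring) (by ring)
      rw [e1, hcolL j, mul_add, mul_one]
      congr 1
      simp only [Finset.mul_sum]
      refine Finset.sum_congr rfl fun k _ => ?_
      rw [mul_ite, mul_ite, mul_zero, mul_zero]
      split_ifs with h
      · rw [show tMon ((j:ℤ)+1-(m i:ℤ)) (-(i:ℤ)) * ((tMon 0 1 - 1) * tMon 0 (k:ℤ))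
            = (tMon 0 1 - 1) * (tMon ((j:ℤ)+1-(m i:ℤ)) (-(i:ℤ)) * tMon 0 (k:ℤ)) from by ring,
          tMon_mul]
        exact congrArg _ (tMon_congr (by ring) (by ring))
      · rfl
    calc (∑ i ∈ Finset.range N, ∑ j ∈ Finset.range (m i),
          tMon (-((m i : ℤ) - (j : ℤ) - 1)) (((conjPart l j : ℤ) - (i : ℤ) - 1) + 1))
        = ∑ i ∈ Finset.range N,
            (∑ j ∈ Finset.range (m i), tMon ((j:ℤ)+1-(m i:ℤ)) (-(i:ℤ))
             + ∑ j ∈ Finset.range (m i), ∑ k ∈ Finset.range N,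
                (if j < l k then (tMon 0 1 - 1) * tMon ((j:ℤ)+1-(m i:ℤ)) ((k:ℤ)-(i:ℤ)) else 0)) := by
          refine Finset.sum_congr rfl fun i _ => ?_
          rw [← Finset.sum_add_distrib]
          exact Finset.sum_congr rfl (step1 i)
      _ = _ := by
          rw [Finset.sum_add_distrib]
          congr 1
          · refine Finset.sum_congr rfl fun i _ => ?_
            rw [← Finset.sum_range_reflect (fun j => tMon (-(j:ℤ)) (-(i:ℤ)))]
            refine Finset.sum_congr rfl fun j hj => ?_
            simp only [Finset.mem_range] at hj
            exact tMon_congr (by omega) rfl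
          · refine Finset.sum_congr rfl fun i _ => ?_
            rw [Finset.sum_comm]
            refine Finset.sum_congr rfl fun k _ => ?_
            rw [sum_ite_range_min (m i) (l k)
              (fun j => (tMon 0 1 - 1) * tMon ((j:ℤ)+1-(m i:ℤ)) ((k:ℤ)-(i:ℤ))),
              Finset.mul_sum]
            refine Finset.sum_congr rfl fun j _ => ?_
            rw [mul_assoc, tMon_mul]
            exact congrArg _ (tMon_congr (by ring) (by ring)).symm
  -- Step R2
  have hR2 : (∑ k ∈ Finset.range N, ∑ j ∈ Finset.range (l k),
        tMon (((l k : ℤ) - (j : ℤ) - 1) + 1) (-((conjPart m j : ℤ) - (k : ℤ) - 1)))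
      = tMon 1 1 * (∑ k ∈ Finset.range N, ∑ j ∈ Finset.range (l k), tMon (j:ℤ) (k:ℤ))
        + ∑ i ∈ Finset.range N, ∑ k ∈ Finset.range N,
            (tMon 0 1 - 1) * tMon 0 ((k:ℤ)-(i:ℤ))
              * (-(∑ j ∈ Finset.range (min (m i) (l k)), tMon ((l k:ℤ)-(j:ℤ)) 0)) := by
    have step2 : ∀ k : ℕ, ∀ j ∈ Finset.range (l k),
        tMon (((l k : ℤ) - (j : ℤ) - 1) + 1) (-((conjPart m j : ℤ) - (k : ℤ) - 1))
          = tMon ((l k:ℤ)-(j:ℤ)) ((k:ℤ)+1)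
            + ∑ i ∈ Finset.range N,
                (if j < m i then -((tMon 0 1 - 1) * tMon ((l k:ℤ)-(j:ℤ)) ((k:ℤ)-(i:ℤ))) else 0) := by
      intro k j _
      have e1 : tMon (((l k : ℤ) - (j : ℤ) - 1) + 1) (-((conjPart m j : ℤ) - (k : ℤ) - 1))
          = tMon ((l k:ℤ)-(j:ℤ)) ((k:ℤ)+1) * tMon 0 (-(conjPart m j : ℤ)) := by
        rw [tMon_mul]; exact tMon_congr (by ring) (by ring)
      rw [e1, hcolM j, mul_add, mul_one]
      congr 1
      simp only [Finset.mul_sum]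
      refine Finset.sum_congr rfl fun i _ => ?_
      rw [mul_ite, mul_ite, mul_zero, mul_zero]
      split_ifs with h
      · rw [show tMon ((l k:ℤ)-(j:ℤ)) ((k:ℤ)+1) * ((tMon 0 (-1) - 1) * tMon 0 (-(i:ℤ)))
            = (tMon 0 (-1) - 1) * (tMon ((l k:ℤ)-(j:ℤ)) ((k:ℤ)+1) * tMon 0 (-(i:ℤ))) from by ring,
          tMon_mul,
          tMon_congr (show ((l k:ℤ)-(j:ℤ))+0 = (l k:ℤ)-(j:ℤ) by ring)
            (show ((k:ℤ)+1)+(-(i:ℤ)) = ((k:ℤ)-(i:ℤ))+1 by ring),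
          vshift]
      · rfl
    calc (∑ k ∈ Finset.range N, ∑ j ∈ Finset.range (l k),
          tMon (((l k : ℤ) - (j : ℤ) - 1) + 1) (-((conjPart m j : ℤ) - (k : ℤ) - 1)))
        = ∑ k ∈ Finset.range N,
            (∑ j ∈ Finset.range (l k), tMon ((l k:ℤ)-(j:ℤ)) ((k:ℤ)+1)
             + ∑ j ∈ Finset.range (l k), ∑ i ∈ Finset.range N,
                (if j < m i then -((tMon 0 1 - 1) * tMon ((l k:ℤ)-(j:ℤ)) ((k:ℤ)-(i:ℤ))) else 0)) := by
          refine Finset.sum_congr rfl fun k _ => ?_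
          rw [← Finset.sum_add_distrib]
          exact Finset.sum_congr rfl (step2 k)
      _ = _ := by
          rw [Finset.sum_add_distrib]
          congr 1
          · rw [Finset.mul_sum]
            refine Finset.sum_congr rfl fun k _ => ?_
            rw [Finset.mul_sum,
              ← Finset.sum_range_reflect (fun j => tMon 1 1 * tMon (j:ℤ) (k:ℤ))]
            refine Finset.sum_congr rfl fun j hj => ?_
            simp only [Finset.mem_range] at hj
            rw [tMon_mul]
            exact tMon_congr (by omega) (by omega)
          · have inner : ∀ k ∈ Finset.range N,
                (∑ j ∈ Finset.range (l k), ∑ i ∈ Finset.range N,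
                  (if j < m i then -((tMon 0 1 - 1) * tMon ((l k:ℤ)-(j:ℤ)) ((k:ℤ)-(i:ℤ))) else 0))
                  = ∑ i ∈ Finset.range N,
                      (tMon 0 1 - 1) * tMon 0 ((k:ℤ)-(i:ℤ))
                        * (-(∑ j ∈ Finset.range (min (m i) (l k)), tMon ((l k:ℤ)-(j:ℤ)) 0)) := by
              intro k _
              rw [Finset.sum_comm]
              refine Finset.sum_congr rfl fun i _ => ?_
              rw [sum_ite_range_min (l k) (m i)
                (fun j => -((tMon 0 1 - 1) * tMon ((l k:ℤ)-(j:ℤ)) ((k:ℤ)-(i:ℤ)))),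
                min_comm (l k) (m i), mul_neg, Finset.mul_sum, ← Finset.sum_neg_distrib]
              refine Finset.sum_congr rfl fun j _ => ?_
              rw [mul_assoc, tMon_mul]
              exact congrArg Neg.neg (congrArg _ (tMon_congr (by ring) (by ring)).symm)
            rw [Finset.sum_congr rfl inner, Finset.sum_comm]
  -- the product G_μ · Ḡ_λ
  have hProd : (∑ i ∈ Finset.range N, ∑ j ∈ Finset.range (m i), tMon (-(j:ℤ)) (-(i:ℤ)))
        * (∑ k ∈ Finset.range N, ∑ j ∈ Finset.range (l k), tMon (j:ℤ) (k:ℤ))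
      = ∑ i ∈ Finset.range N, ∑ k ∈ Finset.range N, tMon 0 ((k:ℤ)-(i:ℤ))
          * ((∑ j ∈ Finset.range (m i), tMon (-(j:ℤ)) 0)
            * (∑ j ∈ Finset.range (l k), tMon (j:ℤ) 0)) := by
    have hAm : ∀ i : ℕ, ∑ j ∈ Finset.range (m i), tMon (-(j:ℤ)) (-(i:ℤ))
        = tMon 0 (-(i:ℤ)) * ∑ j ∈ Finset.range (m i), tMon (-(j:ℤ)) 0 := by
      intro i
      rw [Finset.mul_sum]
      refine Finset.sum_congr rfl fun j _ => ?_
      rw [tMon_mul]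
      exact tMon_congr (by ring) (by ring)
    have hBl : ∀ k : ℕ, ∑ j ∈ Finset.range (l k), tMon (j:ℤ) (k:ℤ)
        = tMon 0 (k:ℤ) * ∑ j ∈ Finset.range (l k), tMon (j:ℤ) 0 := by
      intro k
      rw [Finset.mul_sum]
      refine Finset.sum_congr rfl fun j _ => ?_
      rw [tMon_mul]
      exact tMon_congr (by ring) (by ring)
    rw [Finset.sum_mul_sum]
    refine Finset.sum_congr rfl fun i _ => Finset.sum_congr rfl fun k _ => ?_
    rw [hAm i, hBl k,
      show (tMon 0 (-(i:ℤ)) * ∑ j ∈ Finset.range (m i), tMon (-(j:ℤ)) 0)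
          * (tMon 0 (k:ℤ) * ∑ j ∈ Finset.range (l k), tMon (j:ℤ) 0)
        = (tMon 0 (-(i:ℤ)) * tMon 0 (k:ℤ))
          * ((∑ j ∈ Finset.range (m i), tMon (-(j:ℤ)) 0)
            * (∑ j ∈ Finset.range (l k), tMon (j:ℤ) 0)) from by ring,
      tMon_mul]
    congr 1
    exact tMon_congr (by ring) (by ring)
  -- the central cancellation
  have hC' : -((1 - tMon 1 0) * (1 - tMon 0 1)
        * ((∑ i ∈ Finset.range N, ∑ j ∈ Finset.range (m i), tMon (-(j:ℤ)) (-(i:ℤ)))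
          * (∑ k ∈ Finset.range N, ∑ j ∈ Finset.range (l k), tMon (j:ℤ) (k:ℤ))))
      = (∑ i ∈ Finset.range N, ∑ k ∈ Finset.range N,
          (tMon 0 1 - 1) * tMon 0 ((k:ℤ)-(i:ℤ))
            * ∑ j ∈ Finset.range (min (m i) (l k)), tMon ((j:ℤ)+1-(m i:ℤ)) 0)
        + (∑ i ∈ Finset.range N, ∑ k ∈ Finset.range N,
          (tMon 0 1 - 1) * tMon 0 ((k:ℤ)-(i:ℤ))
            * (-(∑ j ∈ Finset.range (min (m i) (l k)), tMon ((l k:ℤ)-(j:ℤ)) 0))) := by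
    have distrib2 : ∀ (c : LaurentTwo) (F : ℕ → ℕ → LaurentTwo),
        c * (∑ i ∈ Finset.range N, ∑ k ∈ Finset.range N, F i k)
          = ∑ i ∈ Finset.range N, ∑ k ∈ Finset.range N, c * F i k := by
      intro c F
      rw [Finset.mul_sum]
      exact Finset.sum_congr rfl fun i _ => Finset.mul_sum _ _ _
    rw [hProd, ← Finset.sum_add_distrib,
      show -((1 - tMon 1 0) * (1 - tMon 0 1)
          * ∑ i ∈ Finset.range N, ∑ k ∈ Finset.range N, tMon 0 ((k:ℤ)-(i:ℤ))
              * ((∑ j ∈ Finset.range (m i), tMon (-(j:ℤ)) 0)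
                * (∑ j ∈ Finset.range (l k), tMon (j:ℤ) 0)))
        = (-((1 - tMon 1 0) * (1 - tMon 0 1)))
            * ∑ i ∈ Finset.range N, ∑ k ∈ Finset.range N, tMon 0 ((k:ℤ)-(i:ℤ))
              * ((∑ j ∈ Finset.range (m i), tMon (-(j:ℤ)) 0)
                * (∑ j ∈ Finset.range (l k), tMon (j:ℤ) 0)) from by ring,
      distrib2]
    refine Finset.sum_congr rfl fun i _ => ?_
    rw [← Finset.sum_add_distrib]
    refine Finset.sum_congr rfl fun k _ => ?_
    have hfib := fiber (m i) (l k)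
    calc (-((1 - tMon 1 0) * (1 - tMon 0 1)))
          * (tMon 0 ((k:ℤ)-(i:ℤ))
            * ((∑ j ∈ Finset.range (m i), tMon (-(j:ℤ)) 0)
              * (∑ j ∈ Finset.range (l k), tMon (j:ℤ) 0)))
        = (tMon 0 1 - 1) * tMon 0 ((k:ℤ)-(i:ℤ))
            * ((1 - tMon 1 0)
              * ((∑ j ∈ Finset.range (m i), tMon (-(j:ℤ)) 0)
                * (∑ j ∈ Finset.range (l k), tMon (j:ℤ) 0))) := by ring
      _ = (tMon 0 1 - 1) * tMon 0 ((k:ℤ)-(i:ℤ))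
            * ∑ j ∈ Finset.range (min (m i) (l k)),
                (tMon ((j:ℤ)+1-(m i:ℤ)) 0 - tMon ((l k:ℤ)-(j:ℤ)) 0) := by rw [hfib]
      _ = _ := by rw [Finset.sum_sub_distrib]; ring
  -- final assembly
  rw [hR1conv, hR2conv, hR1, hR2, hGm, hGl]
  linear_combination hC'
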